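/- For every positive integer n and every integer p, the sum over k from 0 to n of (-1)^{(p-1)(n-k)} * C(n+k, n-k) * L_p^{2k} equals F_{(2n+1)p} / F_p, provided p ≠ 0. -/

import Mathlib

open Finset

/-- Fibonacci numbers extended to all integers: `F_{-n} = (-1)^{n-1} F_n`. -/
def fibZ (n : ℤ) : ℤ :=
  if 0 ≤ n then Nat.fib n.toNat else (-1) ^ (n.natAbs + 1) * Nat.fib n.natAbs

/-- Lucas numbers extended to all integers: `L_n = F_{n-1} + F_{n+1}`. -/
def lucasZ (n : ℤ) : ℤ := fibZ (n - 1) + fibZ (n + 1)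

section Aux

open goldenRatio Real

private lemma fib_binet' (m : ℕ) : (Nat.fib m : ℝ) * √5 = φ ^ m - ψ ^ m := by
  have h5 : (√5 : ℝ) ≠ 0 := by positivity
  rw [Real.coe_fib_eq, div_mul_cancel₀ _ h5]

private lemma fibZ_binet (p : ℤ) : (fibZ p : ℝ) * √5 = φ ^ p - ψ ^ p := by
  have h5 : (√5 : ℝ) ≠ 0 := by positivity
  rcases le_or_gt 0 p with h | h
  · lift p to ℕ using h
    rw [fibZ, if_pos (by positivity), Int.toNat_natCast, zpow_natCast, zpow_natCast]
    push_cast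
    exact fib_binet' p
  · rw [fibZ, if_neg (by omega)]
    obtain ⟨m, hm⟩ : ∃ m : ℕ, p = -(m : ℤ) := ⟨p.natAbs, by omega⟩
    subst hm
    have hmabs : (-(m:ℤ)).natAbs = m := by simp
    rw [hmabs]
    have hφ : φ ^ (-(m:ℤ)) = (-ψ) ^ m := by
      rw [zpow_neg, zpow_natCast, ← inv_pow, inv_goldenRatio]
    have hψ : ψ ^ (-(m:ℤ)) = (-φ) ^ m := by
      rw [zpow_neg, zpow_natCast, ← inv_pow, inv_goldenConj]
    rw [hφ, hψ, neg_pow ψ, neg_pow φ]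
    push_cast
    linear_combination ((-1 : ℝ)) ^ (m+1) * fib_binet' m

private lemma lucasZ_binet (p : ℤ) : (lucasZ p : ℝ) = φ ^ p + ψ ^ p := by
  have h5 : (√5 : ℝ) ≠ 0 := by positivity
  have h1 := fibZ_binet (p - 1)
  have h2 := fibZ_binet (p + 1)
  have hφ : φ ≠ 0 := goldenRatio_ne_zero
  have hψ : ψ ≠ 0 := goldenConj_ne_zero
  have e1 : φ ^ (p - 1) = φ ^ p * φ⁻¹ := by rw [zpow_sub_one₀ hφ]
  have e2 : ψ ^ (p - 1) = ψ ^ p * ψ⁻¹ := by rw [zpow_sub_one₀ hψ]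
  have e3 : φ ^ (p + 1) = φ ^ p * φ := by rw [zpow_add_one₀ hφ]
  have e4 : ψ ^ (p + 1) = ψ ^ p * ψ := by rw [zpow_add_one₀ hψ]
  have key : (lucasZ p : ℝ) * √5 = (φ ^ p + ψ ^ p) * √5 := by
    rw [lucasZ]
    push_cast
    rw [← goldenRatio_sub_goldenConj]
    calc ((fibZ (p-1) : ℝ) + fibZ (p+1)) * (φ - ψ)
        = (fibZ (p-1) : ℝ) * (φ - ψ) + (fibZ (p+1) : ℝ) * (φ - ψ) := by ring
      _ = (φ ^ (p-1) - ψ ^ (p-1)) + (φ ^ (p+1) - ψ ^ (p+1)) := by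
          rw [← goldenRatio_sub_goldenConj] at h1 h2; rw [h1, h2]
      _ = (φ ^ p + ψ ^ p) * (φ - ψ) := by
          rw [e1, e2, e3, e4, inv_goldenRatio, inv_goldenConj]; ring
  exact mul_right_cancel₀ h5 key

private lemma fibZ_ne_zero {p : ℤ} (hp : p ≠ 0) : fibZ p ≠ 0 := by
  have h1 : 0 < Nat.fib p.natAbs := Nat.fib_pos.mpr (by omega)
  rw [fibZ]
  split
  · have : 0 < Nat.fib p.toNat := Nat.fib_pos.mpr (by omega)
    exact_mod_cast this.ne'
  · intro h
    rcases mul_eq_zero.mp h with h | h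
    · exact pow_ne_zero _ (by norm_num : (-1:ℤ) ≠ 0) h
    · exact (by exact_mod_cast h1.ne' : (Nat.fib p.natAbs : ℤ) ≠ 0) h

variable {R : Type*} [CommRing R]

/-- Chebyshev-like sum. -/
private def Tsum (u z : R) (n : ℕ) : R :=
  ∑ k ∈ range (n + 1), u ^ (n - k) * ((n + k).choose (2 * k) : R) * z ^ k

private lemma choose_key (m j : ℕ) :
    (m + 2).choose (2*j + 2) + m.choose (2*j + 2) =
      2 * ((m + 1).choose (2*j + 2)) + m.choose (2*j) := by
  have h1 : (m + 2).choose (2*j + 2) = (m+1).choose (2*j+1) + (m+1).choose (2*j+2) :=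
    Nat.choose_succ_succ' (m+1) (2*j+1) ▸ rfl
  have h2 : (m + 1).choose (2*j + 2) = m.choose (2*j+1) + m.choose (2*j+2) :=
    Nat.choose_succ_succ' m (2*j+1) ▸ rfl
  have h3 : (m + 1).choose (2*j + 1) = m.choose (2*j) + m.choose (2*j+1) :=
    Nat.choose_succ_succ' m (2*j) ▸ rfl
  omega

private lemma Tsum_rec (u z : R) (n : ℕ) :
    Tsum u z (n + 2) = (z + 2 * u) * Tsum u z (n + 1) - u ^ 2 * Tsum u z n := by
  have hS3 : u ^ 2 * Tsum u z n
      = ∑ k ∈ range (n + 3), u ^ (n + 2 - k) * ((n + k).choose (2 * k) : R) * z ^ k := by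
    symm
    rw [Finset.sum_range_succ, Finset.sum_range_succ]
    have c1 : (n + (n+1)).choose (2 * (n+1)) = 0 := Nat.choose_eq_zero_of_lt (by omega)
    have c2 : (n + (n+2)).choose (2 * (n+2)) = 0 := Nat.choose_eq_zero_of_lt (by omega)
    rw [c1, c2]
    simp only [Nat.cast_zero, mul_zero, zero_mul, add_zero]
    rw [Tsum, Finset.mul_sum]
    refine Finset.sum_congr rfl fun k hk => ?_
    simp only [Finset.mem_range] at hk
    have : n + 2 - k = (n - k) + 2 := by omega
    rw [this, pow_add]
    ring
  have hS2 : 2 * u * Tsum u z (n + 1)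
      = ∑ k ∈ range (n + 3), u ^ (n + 2 - k) * (2 * ((n + 1 + k).choose (2 * k) : R)) * z ^ k := by
    symm
    rw [Finset.sum_range_succ]
    have c1 : (n + 1 + (n+2)).choose (2 * (n+2)) = 0 := Nat.choose_eq_zero_of_lt (by omega)
    rw [c1]
    simp only [Nat.cast_zero, mul_zero, zero_mul, add_zero]
    rw [Tsum, Finset.mul_sum]
    refine Finset.sum_congr rfl fun k hk => ?_
    simp only [Finset.mem_range] at hk
    have : n + 2 - k = (n + 1 - k) + 1 := by omega
    rw [this, pow_add]
    ring
  have hZ : z * Tsum u z (n + 1)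
      = ∑ k ∈ range (n + 2), u ^ (n + 1 - k) * ((n + 1 + k).choose (2 * k) : R) * z ^ (k + 1) := by
    rw [Tsum, Finset.mul_sum]
    refine Finset.sum_congr rfl fun k hk => ?_
    ring
  have main : Tsum u z (n+2) + u ^ 2 * Tsum u z n
      = 2 * u * Tsum u z (n+1) + z * Tsum u z (n+1) := by
    rw [hS3, hS2, hZ, Tsum, ← Finset.sum_add_distrib]
    have lhs_eq : ∑ k ∈ range (n + 3),
        (u ^ (n + 2 - k) * ((n + 2 + k).choose (2 * k) : R) * z ^ k
          + u ^ (n + 2 - k) * ((n + k).choose (2 * k) : R) * z ^ k)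
        = ∑ k ∈ range (n + 3),
          (u ^ (n + 2 - k) * (2 * ((n + 1 + k).choose (2 * k) : R)) * z ^ k
            + u ^ (n + 2 - k) *
              ((if k = 0 then 0 else ((n + k).choose (2 * (k-1)) : R))) * z ^ k) := by
      refine Finset.sum_congr rfl fun k _ => ?_
      rcases Nat.eq_zero_or_pos k with rfl | hk
      · simp; ring
      · obtain ⟨j, rfl⟩ : ∃ j, k = j + 1 := ⟨k - 1, by omega⟩
        simp only [if_neg (Nat.succ_ne_zero j)]
        have hch := choose_key (n + 1 + j) j
        have e1 : n + 2 + (j+1) = (n+1+j) + 2 := by omega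
        have e2 : n + (j+1) = n + 1 + j := by omega
        have e3 : 2 * (j+1) = 2*j + 2 := by omega
        have e4 : (j + 1) - 1 = j := by omega
        have e5 : n + 1 + (j + 1) = n + 1 + j + 1 := by omega
        rw [e1, e2, e3, e4, e5]
        have hc : ((n+1+j+2).choose (2*j+2) : R) + ((n+1+j).choose (2*j+2) : R)
            = 2 * ((n+1+j+1).choose (2*j+2) : R) + ((n+1+j).choose (2*j) : R) := by
          exact_mod_cast congrArg (Nat.cast : ℕ → R) hch
        linear_combination (u ^ (n + 2 - (j+1)) * z ^ (j+1)) * hc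
    rw [show (n + 2 + 1) = n + 3 from rfl]
    rw [lhs_eq, Finset.sum_add_distrib]
    congr 1
    rw [Finset.sum_range_succ']
    simp only [Nat.succ_ne_zero, if_false, reduceIte, mul_zero, zero_mul, add_zero]
    refine Finset.sum_congr rfl fun x hx => ?_
    have e1 : n + 2 - (x + 1) = n + 1 - x := by omega
    have e2 : x + 1 - 1 = x := by omega
    have e3 : n + (x + 1) = n + 1 + x := by omega
    rw [e1, e2, e3]
  linear_combination main

private lemma Tsum_mul (x y : R) (n : ℕ) :
    Tsum (-(x*y)) ((x+y)^2) n * (x - y) = x ^ (2*n+1) - y ^ (2*n+1) := by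
  induction n using Nat.strong_induction_on with
  | _ n ih =>
    match n with
    | 0 => simp [Tsum]
    | 1 =>
      rw [Tsum]
      rw [Finset.sum_range_succ, Finset.sum_range_succ, Finset.sum_range_zero]
      norm_num
      ring
    | (m+2) =>
      have h1 := ih m (by omega)
      have h2 := ih (m+1) (by omega)
      rw [Tsum_rec]
      linear_combination ((x+y)^2 + 2*(-(x*y))) * h2 - (x*y)^2 * h1

end Aux

open goldenRatio Real in
theorem stmt_19 (n : ℕ) (hn : 0 < n) (p : ℤ) (hp : p ≠ 0) :
    ∑ k ∈ range (n + 1), (-1 : ℚ) ^ ((p - 1) * ((n : ℤ) - k)) *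
      (Nat.choose (n + k) (n - k)) * (lucasZ p : ℚ) ^ (2 * k) =
    (fibZ ((2 * n + 1) * p) : ℚ) / (fibZ p : ℚ) := by
  have h5 : (√5 : ℝ) ≠ 0 := by positivity
  have hfibp : (fibZ p : ℝ) ≠ 0 := by exact_mod_cast fibZ_ne_zero hp
  apply Rat.cast_injective (α := ℝ)
  push_cast
  set x : ℝ := φ ^ p with hx
  set y : ℝ := ψ ^ p with hy
  have hu : -(x * y) = (-1 : ℝ) ^ (p - 1) := by
    rw [hx, hy, ← mul_zpow, goldenRatio_mul_goldenConj,
      zpow_sub_one₀ (by norm_num : (-1:ℝ) ≠ 0)]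
    norm_num
  -- identify LHS with Tsum
  have hL : ∑ k ∈ range (n + 1), (-1 : ℝ) ^ ((p - 1) * ((n : ℤ) - k)) *
      ((n + k).choose (n - k) : ℝ) * (lucasZ p : ℝ) ^ (2 * k)
      = Tsum (-(x*y)) ((x+y)^2) n := by
    rw [Tsum]
    refine Finset.sum_congr rfl fun k hk => ?_
    simp only [Finset.mem_range] at hk
    have hkn : k ≤ n := by omega
    have hc : (n + k).choose (n - k) = (n + k).choose (2 * k) := by
      have h1 : (n + k) - (2 * k) = n - k := by omega
      rw [← h1, Nat.choose_symm (by omega : 2 * k ≤ n + k)]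
    have hsign : (-1 : ℝ) ^ ((p - 1) * ((n : ℤ) - k)) = (-(x*y)) ^ (n - k) := by
      have hcast : ((n : ℤ) - k) = ((n - k : ℕ) : ℤ) := by push_cast [hkn]; ring
      rw [hcast, zpow_mul, zpow_natCast, hu]
    have hlp : (lucasZ p : ℝ) ^ (2 * k) = ((x + y) ^ 2) ^ k := by
      rw [lucasZ_binet, ← pow_mul]
    rw [hc, hsign, hlp]
  rw [hL]
  -- compute Tsum via the geometric identity
  have key := Tsum_mul x y n
  have hx2 : x ^ (2*n+1) = φ ^ ((2 * (n:ℤ) + 1) * p) := by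
    rw [hx, ← zpow_natCast (φ ^ p) (2*n+1), ← zpow_mul]
    congr 1
    push_cast
    ring
  have hy2 : y ^ (2*n+1) = ψ ^ ((2 * (n:ℤ) + 1) * p) := by
    rw [hy, ← zpow_natCast (ψ ^ p) (2*n+1), ← zpow_mul]
    congr 1
    push_cast
    ring
  have hxy : x - y = (fibZ p : ℝ) * √5 := (fibZ_binet p).symm
  have hbig : x ^ (2*n+1) - y ^ (2*n+1) = (fibZ ((2 * (n:ℤ) + 1) * p) : ℝ) * √5 := by
    rw [hx2, hy2, fibZ_binet]
  rw [hxy, hbig] at key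
  rw [eq_div_iff hfibp]
  apply mul_right_cancel₀ h5
  linear_combination key
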